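/- For every k ≥ 1, the total number of right steps in all dispersed Dyck paths of length 2k equals twice the total number of right steps in all dispersed Dyck paths of length 2k−1; that is, R(2k) = 2·R(2k−1). -/

import Mathlib

inductive DStep | up | down | right
deriving DecidableEq, Repr

instance : Fintype DStep := ⟨{.up, .down, .right}, fun x => by cases x <;> simp⟩

/-- Run a dispersed Dyck path from height `h`; `none` if an illegal step occurs,
otherwise the final height. Down steps require positive height; right steps require height 0. -/
def DStep.run : ℕ → List DStep → Option ℕ
  | h, [] => some h
  | h, .up :: l => DStep.run (h + 1) l
  | h + 1, .down :: l => DStep.run h l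
  | 0, .down :: _ => none
  | 0, .right :: l => DStep.run 0 l
  | _ + 1, .right :: _ => none

/-- A dispersed Dyck path: starts and ends at height 0, all steps legal. -/
def IsDDP (l : List DStep) : Prop := DStep.run 0 l = some 0

instance : DecidablePred IsDDP := fun l => by unfold IsDDP; infer_instance

/-- The finset of all dispersed Dyck paths of length `n`. -/
def DDPs (n : ℕ) : Finset (List.Vector DStep n) :=
  Finset.univ.filter (fun v => IsDDP v.toList)

/-- Number of dispersed Dyck paths of length `n`. -/
def dD (n : ℕ) : ℕ := (DDPs n).card

/-- Total number of up steps over all DDPs of length `n`. -/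
def U (n : ℕ) : ℕ := ∑ v ∈ DDPs n, v.toList.count DStep.up

/-- Total number of down steps over all DDPs of length `n`. -/
def D (n : ℕ) : ℕ := ∑ v ∈ DDPs n, v.toList.count DStep.down

/-- Total number of right steps over all DDPs of length `n`. -/
def R (n : ℕ) : ℕ := ∑ v ∈ DDPs n, v.toList.count DStep.right

/-- `i` is the position of a 1-ascent in `l`: an up step with no adjacent up step. -/
def IsOneAscentAt (l : List DStep) (i : ℕ) : Prop :=
  l[i]? = some .up ∧ l[i + 1]? ≠ some .up ∧ (i = 0 ∨ l[i - 1]? ≠ some .up)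

instance (l : List DStep) : DecidablePred (IsOneAscentAt l) := fun i => by
  unfold IsOneAscentAt; infer_instance

/-- Number of 1-ascents in `l`. -/
def oneAsc (l : List DStep) : ℕ :=
  ((Finset.range l.length).filter (IsOneAscentAt l)).card

/-- Total number of 1-ascents over all DDPs of length `n`. -/
def A (n : ℕ) : ℕ := ∑ v ∈ DDPs n, oneAsc v.toList

/-- Signed final height of a plain path (ignoring any right steps). -/
def psum : List DStep → ℤ
  | [] => 0
  | .up :: l => 1 + psum l
  | .down :: l => -1 + psum l
  | .right :: l => psum l



/-! ### Auxiliary machinery for `right_right_recursion` -/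

/-- Number of legal dispersed paths of length `n` from height `h` to height `0`. -/
def Mf : ℕ → ℕ → ℕ
  | 0, 0 => 1
  | _ + 1, 0 => 0
  | 0, n + 1 => Mf 1 n + Mf 0 n
  | h + 1, n + 1 => Mf (h + 2) n + Mf h n

/-- Total number of right steps over all legal dispersed paths of length `n`
from height `h` to height `0`. -/
def Wf : ℕ → ℕ → ℕ
  | _, 0 => 0
  | 0, n + 1 => Wf 1 n + Wf 0 n + Mf 0 n
  | h + 1, n + 1 => Wf (h + 2) n + Wf h n

lemma Mf_zero (h : ℕ) : Mf h 0 = if h = 0 then 1 else 0 := by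
  cases h <;> rfl

lemma Mf_parity : ∀ n h, (n + h) % 2 = 1 → Mf h n = Mf (h + 1) n := by
  intro n
  induction n with
  | zero =>
    intro h hh
    cases h with
    | zero => omega
    | succ m => rfl
  | succ n ih =>
    intro h hh
    cases h with
    | zero =>
      show Mf 1 n + Mf 0 n = Mf 2 n + Mf 0 n
      rw [ih 1 (by omega)]
    | succ m =>
      show Mf (m + 2) n + Mf m n = Mf (m + 3) n + Mf (m + 1) n
      rw [ih m (by omega), ih (m + 2) (by omega)]

lemma Wf_master : ∀ n h, Wf h n = Wf (h + 1) n + Mf (h + 1) n := by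
  intro n
  induction n with
  | zero => intro h; simp [Wf, Mf_zero]
  | succ n ih =>
    intro h
    cases h with
    | zero =>
      show Wf 1 n + Wf 0 n + Mf 0 n = (Wf 2 n + Wf 0 n) + (Mf 2 n + Mf 0 n)
      have h1 : Wf 1 n = Wf 2 n + Mf 2 n := ih 1
      omega
    | succ m =>
      show Wf (m + 2) n + Wf m n
          = (Wf (m + 3) n + Wf (m + 1) n) + (Mf (m + 3) n + Mf (m + 1) n)
      have h1 : Wf (m + 1) n = Wf (m + 2) n + Mf (m + 2) n := ih (m + 1)
      have h2 : Wf (m + 2) n = Wf (m + 3) n + Mf (m + 3) n := ih (m + 2)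
      have h3 : Wf m n = Wf (m + 1) n + Mf (m + 1) n := ih m
      omega

/-- Indicator-sum version of `Mf` over vectors. -/
def Sc (h n : ℕ) : ℕ :=
  ∑ v : List.Vector DStep n, if DStep.run h v.toList = some 0 then 1 else 0

/-- Right-step-count version of `Wf` over vectors. -/
def Sr (h n : ℕ) : ℕ :=
  ∑ v : List.Vector DStep n,
    if DStep.run h v.toList = some 0 then v.toList.count DStep.right else 0

lemma sum_dstep (g : DStep → ℕ) : ∑ a : DStep, g a = g .up + g .down + g .right := by
  have h : (Finset.univ : Finset DStep) = {.up, .down, .right} := by decide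
  rw [h, Finset.sum_insert (by decide), Finset.sum_insert (by decide),
    Finset.sum_singleton]
  ring

def consEquiv (n : ℕ) : DStep × List.Vector DStep n ≃ List.Vector DStep (n + 1) where
  toFun p := p.1 ::ᵥ p.2
  invFun v := (v.head, v.tail)
  left_inv p := by simp
  right_inv v := by simp [List.Vector.cons_head_tail]

lemma sum_vec_succ (n : ℕ) (f : List.Vector DStep (n + 1) → ℕ) :
    ∑ v : List.Vector DStep (n + 1), f v
      = ∑ v : List.Vector DStep n,
          (f (.up ::ᵥ v) + f (.down ::ᵥ v) + f (.right ::ᵥ v)) := by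
  rw [← Equiv.sum_comp (consEquiv n) f, Fintype.sum_prod_type]
  simp only [consEquiv, Equiv.coe_fn_mk]
  rw [sum_dstep (fun a => ∑ v : List.Vector DStep n, f (a ::ᵥ v))]
  rw [← Finset.sum_add_distrib, ← Finset.sum_add_distrib]

lemma vec_zero_toList (v : List.Vector DStep 0) : v.toList = [] :=
  List.length_eq_zero_iff.mp v.toList_length

lemma Sc_eq : ∀ n h, Sc h n = Mf h n := by
  intro n
  induction n with
  | zero =>
    intro h
    unfold Sc
    simp only [vec_zero_toList, DStep.run]
    rw [Finset.sum_const]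
    rw [Mf_zero]
    rcases h with _ | m <;> simp [card_vector]
  | succ n ih =>
    intro h
    unfold Sc
    rw [sum_vec_succ n
      (fun v => if DStep.run h v.toList = some 0 then 1 else 0)]
    simp only [List.Vector.toList_cons]
    rcases h with _ | m
    · have e1 : ∀ l, DStep.run 0 (.up :: l) = DStep.run 1 l := fun _ => rfl
      have e2 : ∀ l, DStep.run 0 (.down :: l) = none := fun _ => rfl
      have e3 : ∀ l, DStep.run 0 (.right :: l) = DStep.run 0 l := fun _ => rfl
      simp only [e1, e2, e3, reduceCtorEq, if_false, add_zero]
      rw [Finset.sum_add_distrib]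
      show Sc 1 n + Sc 0 n = Mf 0 (n + 1)
      rw [ih 1, ih 0]; rfl
    · have e1 : ∀ l, DStep.run (m + 1) (.up :: l) = DStep.run (m + 2) l := fun _ => rfl
      have e2 : ∀ l, DStep.run (m + 1) (.down :: l) = DStep.run m l := fun _ => rfl
      have e3 : ∀ l, DStep.run (m + 1) (.right :: l) = none := fun _ => rfl
      simp only [e1, e2, e3, reduceCtorEq, if_false, add_zero]
      rw [Finset.sum_add_distrib]
      show Sc (m + 2) n + Sc m n = Mf (m + 1) (n + 1)
      rw [ih (m + 2), ih m]; rfl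

lemma Sr_eq : ∀ n h, Sr h n = Wf h n := by
  intro n
  induction n with
  | zero =>
    intro h
    unfold Sr
    simp only [vec_zero_toList, List.count_nil]
    simp [Wf]
  | succ n ih =>
    intro h
    unfold Sr
    rw [sum_vec_succ n
      (fun v => if DStep.run h v.toList = some 0 then v.toList.count DStep.right else 0)]
    simp only [List.Vector.toList_cons, List.count_cons]
    rcases h with _ | m
    · have e1 : ∀ l, DStep.run 0 (.up :: l) = DStep.run 1 l := fun _ => rfl
      have e2 : ∀ l, DStep.run 0 (.down :: l) = none := fun _ => rfl
      have e3 : ∀ l, DStep.run 0 (.right :: l) = DStep.run 0 l := fun _ => rfl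
      simp only [e1, e2, e3, reduceCtorEq, if_false, if_true, beq_iff_eq,
        add_zero, beq_self_eq_true]
      have split : ∀ v : List.Vector DStep n,
          (if DStep.run 0 v.toList = some 0 then v.toList.count DStep.right + 1 else 0)
            = (if DStep.run 0 v.toList = some 0 then v.toList.count DStep.right else 0)
              + (if DStep.run 0 v.toList = some 0 then 1 else 0) := by
        intro v; split <;> simp
      simp only [split]
      rw [Finset.sum_add_distrib, Finset.sum_add_distrib]
      show Sr 1 n + (Sr 0 n + Sc 0 n) = Wf 0 (n + 1)
      rw [ih 1, ih 0, Sc_eq n 0]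
      show Wf 1 n + (Wf 0 n + Mf 0 n) = Wf 1 n + Wf 0 n + Mf 0 n
      omega
    · have e1 : ∀ l, DStep.run (m + 1) (.up :: l) = DStep.run (m + 2) l := fun _ => rfl
      have e2 : ∀ l, DStep.run (m + 1) (.down :: l) = DStep.run m l := fun _ => rfl
      have e3 : ∀ l, DStep.run (m + 1) (.right :: l) = none := fun _ => rfl
      simp only [e1, e2, e3, reduceCtorEq, if_false, beq_iff_eq, add_zero]
      rw [Finset.sum_add_distrib]
      show Sr (m + 2) n + Sr m n = Wf (m + 1) (n + 1)
      rw [ih (m + 2), ih m]; rfl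

lemma R_eq (n : ℕ) : R n = Wf 0 n := by
  rw [← Sr_eq n 0]
  unfold R DDPs Sr
  rw [Finset.sum_filter]
  exact Finset.sum_congr rfl (fun v _ => if_congr Iff.rfl rfl rfl)

/-- For `k ≥ 1`, the total number of right steps in all DDPs of length `2k` is twice
the total number of right steps in all DDPs of length `2k - 1`. -/
theorem right_right_recursion (k : ℕ) (hk : 1 ≤ k) : R (2 * k) = 2 * R (2 * k - 1) := by
  obtain ⟨j, rfl⟩ : ∃ j, k = j + 1 := ⟨k - 1, by omega⟩
  have h1 : 2 * (j + 1) = (2 * j + 1) + 1 := by ring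
  have h2 : 2 * (j + 1) - 1 = 2 * j + 1 := by omega
  rw [h2, h1, R_eq, R_eq]
  show Wf 1 (2 * j + 1) + Wf 0 (2 * j + 1) + Mf 0 (2 * j + 1) = 2 * Wf 0 (2 * j + 1)
  have hm : Mf 0 (2 * j + 1) = Mf 1 (2 * j + 1) := Mf_parity (2 * j + 1) 0 (by omega)
  have hw : Wf 0 (2 * j + 1) = Wf 1 (2 * j + 1) + Mf 1 (2 * j + 1) := Wf_master (2 * j + 1) 0
  omega
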